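/- A Banach space X is LUR if and only if X is rotund, strongly locally U-convex, and satisfies the property (HS). -/

import Mathlib

open Metric Filter Topology NormedSpace

noncomputable section

/-- The face `S(X, f, 0) = {y ∈ B_X : f(y) = 1}` determined by a functional `f`. -/
def face (X : Type*) [NormedAddCommGroup X] [NormedSpace ℝ X] (f : X →L[ℝ] ℝ) : Set X :=
  {y | ‖y‖ ≤ 1 ∧ f y = 1}

/-- Property (HS). -/
def HSProp (X : Type*) [NormedAddCommGroup X] [NormedSpace ℝ X] : Prop :=
  ∀ f : X →L[ℝ] ℝ, ‖f‖ = 1 → (face X f).Nonempty →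
    ∀ xs : ℕ → X, (∀ n, ‖xs n‖ ≤ 1) →
      Tendsto (fun n => f (xs n)) atTop (𝓝 1) →
      Tendsto (fun n => infDist (xs n) (face X f)) atTop (𝓝 0)

/-- Property (HLUR). -/
def HLUR (X : Type*) [NormedAddCommGroup X] [NormedSpace ℝ X] : Prop :=
  ∀ x : X, ‖x‖ = 1 → ∀ xs : ℕ → X, (∀ n, ‖xs n‖ = 1) →
    Tendsto (fun n => ‖xs n + x‖) atTop (𝓝 2) →
    ∀ f : X →L[ℝ] ℝ, ‖f‖ = 1 → f x = 1 →
      Tendsto (fun n => infDist (xs n) (face X f)) atTop (𝓝 0)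

/-- Local uniform rotundity. -/
def LUR (X : Type*) [NormedAddCommGroup X] [NormedSpace ℝ X] : Prop :=
  ∀ x : X, ‖x‖ = 1 → ∀ xs : ℕ → X, (∀ n, ‖xs n‖ = 1) →
    Tendsto (fun n => ‖xs n + x‖) atTop (𝓝 2) → Tendsto xs atTop (𝓝 x)

/-- Compact local uniform rotundity. -/
def CLUR (X : Type*) [NormedAddCommGroup X] [NormedSpace ℝ X] : Prop :=
  ∀ x : X, ‖x‖ = 1 → ∀ xs : ℕ → X, (∀ n, ‖xs n‖ = 1) →
    Tendsto (fun n => ‖xs n + x‖) atTop (𝓝 2) →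
    ∃ φ : ℕ → ℕ, StrictMono φ ∧ ∃ z : X, Tendsto (xs ∘ φ) atTop (𝓝 z)

/-- Local U-convexity. -/
def LocallyUConvex (X : Type*) [NormedAddCommGroup X] [NormedSpace ℝ X] : Prop :=
  ∀ x : X, ‖x‖ = 1 → ∀ xs : ℕ → X, (∀ n, ‖xs n‖ = 1) →
    Tendsto (fun n => ‖xs n + x‖) atTop (𝓝 2) →
    ∃ f : X →L[ℝ] ℝ, ‖f‖ = 1 ∧ f x = 1 ∧ Tendsto (fun n => f (xs n)) atTop (𝓝 1)

/-- Strong local U-convexity. -/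
def StronglyLocallyUConvex (X : Type*) [NormedAddCommGroup X] [NormedSpace ℝ X] : Prop :=
  ∀ x : X, ‖x‖ = 1 → ∀ xs : ℕ → X, (∀ n, ‖xs n‖ = 1) →
    Tendsto (fun n => ‖xs n + x‖) atTop (𝓝 2) →
    ∀ f : X →L[ℝ] ℝ, ‖f‖ = 1 → f x = 1 → Tendsto (fun n => f (xs n)) atTop (𝓝 1)

/-- Rotundity (strict convexity): every face has at most one element. -/
def Rotund (X : Type*) [NormedAddCommGroup X] [NormedSpace ℝ X] : Prop :=
  ∀ f : X →L[ℝ] ℝ, ‖f‖ = 1 → (face X f).Subsingleton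

/-- Near strict convexity: every face is norm-compact. -/
def NSC (X : Type*) [NormedAddCommGroup X] [NormedSpace ℝ X] : Prop :=
  ∀ f : X →L[ℝ] ℝ, ‖f‖ = 1 → IsCompact (face X f)

/-- Kadets-Klee property. -/
def KadetsKlee (X : Type*) [NormedAddCommGroup X] [NormedSpace ℝ X] : Prop :=
  ∀ (xs : ℕ → X) (x : X),
    (∀ f : X →L[ℝ] ℝ, Tendsto (fun n => f (xs n)) atTop (𝓝 (f x))) →
    Tendsto (fun n => ‖xs n‖) atTop (𝓝 ‖x‖) → Tendsto xs atTop (𝓝 x)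

/-- Alternatively convex or smooth. -/
def ACS (X : Type*) [NormedAddCommGroup X] [NormedSpace ℝ X] : Prop :=
  ∀ x y : X, ‖x‖ = 1 → ‖y‖ = 1 → ∀ f : X →L[ℝ] ℝ, ‖f‖ = 1 →
    ‖x + y‖ = 2 → f x = 1 → f y = 1

/-- Smoothness: each unit vector has a unique norming functional. -/
def SmoothSpace (X : Type*) [NormedAddCommGroup X] [NormedSpace ℝ X] : Prop :=
  ∀ x : X, ‖x‖ = 1 → ∃! f : X →L[ℝ] ℝ, ‖f‖ = 1 ∧ f x = 1

/-- Reflexivity of a normed space. -/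
def ReflexiveSpace (X : Type*) [NormedAddCommGroup X] [NormedSpace ℝ X] : Prop :=
  Function.Surjective (inclusionInDoubleDual ℝ X)

/-- Strong rotundity: reflexive, rotund and Kadets-Klee. -/
def StronglyRotund (X : Type*) [NormedAddCommGroup X] [NormedSpace ℝ X] : Prop :=
  ReflexiveSpace X ∧ Rotund X ∧ KadetsKlee X

theorem lur_iff_rotund_sluc_hs (X : Type*) [NormedAddCommGroup X] [NormedSpace ℝ X]
    [CompleteSpace X] :
    LUR X ↔ Rotund X ∧ StronglyLocallyUConvex X ∧ HSProp X := by
  constructor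
  · intro hL
    refine ⟨?_, ?_, ?_⟩
    · -- Rotund
      intro f hf y hy z hz
      have hy1 : ‖y‖ = 1 := by
        refine le_antisymm hy.1 ?_
        have := f.le_opNorm y
        have hfy : |f y| ≤ ‖f‖ * ‖y‖ := this
        rw [hy.2, hf, one_mul] at hfy
        simpa using hfy
      have hz1 : ‖z‖ = 1 := by
        refine le_antisymm hz.1 ?_
        have hfy : |f z| ≤ ‖f‖ * ‖z‖ := f.le_opNorm z
        rw [hz.2, hf, one_mul] at hfy
        simpa using hfy
      have hsum : ‖y + z‖ = 2 := by
        refine le_antisymm ?_ ?_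
        · calc ‖y + z‖ ≤ ‖y‖ + ‖z‖ := norm_add_le _ _
            _ = 2 := by rw [hy1, hz1]; norm_num
        · have : f (y + z) ≤ ‖f (y + z)‖ := le_abs_self _
          have h2 : ‖f (y + z)‖ ≤ ‖f‖ * ‖y + z‖ := f.le_opNorm _
          rw [hf, one_mul] at h2
          have : (2 : ℝ) ≤ ‖y + z‖ := by
            have hfyz : f (y + z) = 2 := by rw [map_add, hy.2, hz.2]; norm_num
            linarith [le_abs_self (f (y + z)), hfyz ▸ h2]
          linarith
      have := hL z hz1 (fun _ => y) (fun _ => hy1)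
        (by simpa [hsum] using (tendsto_const_nhds : Tendsto (fun _ : ℕ => ‖y + z‖) atTop _))
      exact tendsto_nhds_unique tendsto_const_nhds this
    · -- StronglyLocallyUConvex
      intro x hx xs hxs hlim f hf hfx
      have h := hL x hx xs hxs hlim
      have := (f.continuous.tendsto x).comp h
      rw [hfx] at this
      exact this
    · -- HSProp
      intro f hf ⟨e, he⟩ xs hxs hflim
      have he1 : ‖e‖ = 1 := by
        refine le_antisymm he.1 ?_
        have hfy : |f e| ≤ ‖f‖ * ‖e‖ := f.le_opNorm e
        rw [he.2, hf, one_mul] at hfy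
        simpa using hfy
      -- ‖xs n‖ → 1
      have hnorm : Tendsto (fun n => ‖xs n‖) atTop (𝓝 1) := by
        refine tendsto_of_tendsto_of_tendsto_of_le_of_le hflim tendsto_const_nhds
          (fun n => ?_) (fun n => hxs n)
        calc f (xs n) ≤ ‖f (xs n)‖ := le_abs_self _
          _ ≤ ‖f‖ * ‖xs n‖ := f.le_opNorm _
          _ = ‖xs n‖ := by rw [hf, one_mul]
      classical
      have hev : ∀ᶠ n in atTop, xs n ≠ 0 := by
        have : ∀ᶠ n in atTop, f (xs n) > 1/2 :=
          hflim.eventually (eventually_gt_nhds (by norm_num))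
        filter_upwards [this] with n hn
        intro h0
        rw [h0] at hn
        simp at hn
        linarith
      set ys : ℕ → X := fun n => if xs n = 0 then e else ‖xs n‖⁻¹ • xs n with hys
      have hys1 : ∀ n, ‖ys n‖ = 1 := by
        intro n
        simp only [hys]
        split_ifs with h
        · exact he1
        · rw [norm_smul, norm_inv, norm_norm, inv_mul_cancel₀ (norm_ne_zero_iff.mpr h)]
      have hysn : ∀ᶠ n in atTop, ys n = ‖xs n‖⁻¹ • xs n := by
        filter_upwards [hev] with n hn
        simp [hys, hn]
      -- f (ys n) → 1
      have hfys : Tendsto (fun n => f (ys n)) atTop (𝓝 1) := by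
        have h1 : Tendsto (fun n => ‖xs n‖⁻¹ * f (xs n)) atTop (𝓝 1) := by
          have := (hnorm.inv₀ one_ne_zero).mul hflim
          simpa using this
        refine Tendsto.congr' ?_ h1
        filter_upwards [hysn] with n hn
        rw [hn, map_smul, smul_eq_mul]
      -- ‖ys n + e‖ → 2
      have hlim2 : Tendsto (fun n => ‖ys n + e‖) atTop (𝓝 2) := by
        refine tendsto_of_tendsto_of_tendsto_of_le_of_le'
          (g := fun n => f (ys n) + 1) (h := fun _ => (2:ℝ))
          (by
            have h := hfys.add (tendsto_const_nhds : Tendsto (fun _ : ℕ => (1:ℝ)) atTop _)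
            norm_num at h
            exact h)
          tendsto_const_nhds ?_ ?_
        · filter_upwards with n
          calc f (ys n) + 1 = f (ys n + e) := by rw [map_add, he.2]
            _ ≤ ‖f (ys n + e)‖ := le_abs_self _
            _ ≤ ‖f‖ * ‖ys n + e‖ := f.le_opNorm _
            _ = ‖ys n + e‖ := by rw [hf, one_mul]
        · filter_upwards with n
          calc ‖ys n + e‖ ≤ ‖ys n‖ + ‖e‖ := norm_add_le _ _
            _ = 2 := by rw [hys1 n, he1]; norm_num
      have hyse : Tendsto ys atTop (𝓝 e) := hL e he1 ys hys1 hlim2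
      -- xs n → e
      have hxse : Tendsto xs atTop (𝓝 e) := by
        have h1 : Tendsto (fun n => ‖xs n‖ • ys n) atTop (𝓝 ((1:ℝ) • e)) :=
          hnorm.smul hyse
        rw [one_smul] at h1
        refine Tendsto.congr' ?_ h1
        filter_upwards [hev] with n hn
        simp [hys, hn, smul_smul, mul_inv_cancel₀ (norm_ne_zero_iff.mpr hn)]
      -- conclude
      refine tendsto_of_tendsto_of_tendsto_of_le_of_le
        (tendsto_const_nhds : Tendsto (fun _ : ℕ => (0:ℝ)) atTop _)
        ?_ (fun n => infDist_nonneg) (fun n => infDist_le_dist_of_mem he)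
      have := hxse.dist (tendsto_const_nhds : Tendsto (fun _ : ℕ => e) atTop _)
      simpa using this
  · rintro ⟨hR, hS, hH⟩ x hx xs hxs hlim
    obtain ⟨f, hf1, hfx⟩ := exists_dual_vector ℝ x (norm_ne_zero_iff.mp (by rw [hx]; norm_num))
    have hfx1 : f x = 1 := by rw [hfx, hx]; norm_num
    have hxface : x ∈ face X f := ⟨hx.le, hfx1⟩
    have hflim := hS x hx xs hxs hlim f hf1 hfx1
    have hID := hH f hf1 ⟨x, hxface⟩ xs (fun n => (hxs n).le) hflim
    have hface : face X f = {x} := by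
      apply Set.eq_singleton_iff_unique_mem.mpr
      exact ⟨hxface, fun y hy => hR f hf1 hy hxface⟩
    rw [tendsto_iff_dist_tendsto_zero]
    refine hID.congr fun n => ?_
    rw [hface, infDist_singleton]
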